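/- arXiv:2507.00160 — 2 statements merged into one kernel-verified Lean document; each statement's English description precedes it below -/
import Mathlib

section
/- Let O ⊆ ℝ^d be a bounded open set whose boundary is of class C², let p be a real number with p ≥ 2, and let λ > 0. Suppose u₁ and u₂ are real-valued functions, each twice continuously differentiable on O and continuously differentiable on the closure of O, and each u = u_i satisfies Δu(x) − u(x)^{p−1} + λ u(x) = 0 and u(x) > 0 for all x ∈ O, and u(x) = 0 for all x ∈ ∂O. Then ∫_O ( u₁(x)^{p−1} u₂(x) − u₂(x)^{p−1} u₁(x) ) dx = 0. -/
open MeasureTheory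

/-- The Laplacian `Δu(x) = ∑ i, ∂²u/∂x_i²(x)` as the sum of second partial derivatives. -/
noncomputable def lap {d : ℕ} (u : EuclideanSpace ℝ (Fin d) → ℝ)
    (x : EuclideanSpace ℝ (Fin d)) : ℝ :=
  ∑ i : Fin d, fderiv ℝ (fun y => fderiv ℝ u y (EuclideanSpace.single i (1 : ℝ))) x
    (EuclideanSpace.single i (1 : ℝ))

/-- An open set `O` has boundary of class `C²`: near each boundary point there is a `C²`
defining function with nonvanishing differential whose zero set is the boundary and
whose negativity set is `O` (a standard formulation of a `C²` boundary, equivalent to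
the local flattening by a `C²` diffeomorphism). -/
def IsC2Boundary {d : ℕ} (O : Set (EuclideanSpace ℝ (Fin d))) : Prop :=
  ∀ x ∈ frontier O, ∃ U : Set (EuclideanSpace ℝ (Fin d)), IsOpen U ∧ x ∈ U ∧
    ∃ ρ : EuclideanSpace ℝ (Fin d) → ℝ,
      ContDiffOn ℝ 2 ρ U ∧ (∀ y ∈ U, fderiv ℝ ρ y ≠ 0) ∧
      (∀ y ∈ U, (y ∈ O ↔ ρ y < 0)) ∧ (∀ y ∈ U, (y ∈ frontier O ↔ ρ y = 0))


open Metric Set Filter Bornology Topology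


lemma exists_fderiv_bound {E : Type*} [NormedAddCommGroup E] [NormedSpace ℝ E]
    {O : Set E} (hO : IsOpen O) (hK : IsCompact (closure O)) (u : E → ℝ)
    (hu : ContDiffOn ℝ 1 u (closure O)) :
    ∃ M : ℝ, 0 ≤ M ∧ ∀ x ∈ O, ‖fderiv ℝ u x‖ ≤ M := by
  have loc : ∀ x ∈ closure O, ∃ V : Set E, IsOpen V ∧ x ∈ V ∧
      ∃ C : ℝ, ∀ y ∈ O ∩ V, ‖fderiv ℝ u y‖ ≤ C := by
    intro x hx
    have h1 : ContDiffWithinAt ℝ (0 + 1) u (closure O) x := by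
      simpa using hu x hx
    rw [contDiffWithinAt_succ_iff_hasFDerivWithinAt (by simp)] at h1
    obtain ⟨t, ht, -, f', hf', hf'c⟩ := h1
    rw [insert_eq_of_mem hx] at ht
    obtain ⟨V₁, hV₁o, hxV₁, hV₁⟩ : ∃ V₁, IsOpen V₁ ∧ x ∈ V₁ ∧ V₁ ∩ closure O ⊆ t :=
      mem_nhdsWithin.1 ht
    have hcont : ContinuousWithinAt f' t x := hf'c.continuousWithinAt
    have hball := hcont (Metric.ball_mem_nhds (f' x) one_pos)
    obtain ⟨V₂, hV₂o, hxV₂, hV₂⟩ : ∃ V₂, IsOpen V₂ ∧ x ∈ V₂ ∧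
        V₂ ∩ t ⊆ f' ⁻¹' Metric.ball (f' x) 1 := mem_nhdsWithin.1 hball
    refine ⟨V₁ ∩ V₂, hV₁o.inter hV₂o, ⟨hxV₁, hxV₂⟩, ‖f' x‖ + 1, ?_⟩
    rintro y ⟨hyO, hyV₁, hyV₂⟩
    have hyt : y ∈ t := hV₁ ⟨hyV₁, subset_closure hyO⟩
    have hOV₁ : (O ∩ V₁) ⊆ t := fun z hz => hV₁ ⟨hz.2, subset_closure hz.1⟩
    have htny : t ∈ nhds y :=
      Filter.mem_of_superset ((hO.inter hV₁o).mem_nhds ⟨hyO, hyV₁⟩) hOV₁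
    have hderiv : HasFDerivAt u (f' y) y := (hf' y hyt).hasFDerivAt htny
    rw [hderiv.fderiv]
    have hb : ‖f' y - f' x‖ < 1 := by
      have := hV₂ ⟨hyV₂, hyt⟩
      simpa [Metric.mem_ball, dist_eq_norm] using this
    have : ‖f' y‖ ≤ ‖f' x‖ + ‖f' y - f' x‖ := norm_le_insert' _ _
    linarith
  choose V hVo hxV C hC using loc
  obtain ⟨s, hcover⟩ := hK.elim_nhds_subcover' (fun x hx => V x hx)
    (fun x hx => (hVo x hx).mem_nhds (hxV x hx))
  refine ⟨∑ x ∈ s, |C x x.2|, Finset.sum_nonneg fun i _ => abs_nonneg _, ?_⟩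
  intro y hy
  have : y ∈ ⋃ x ∈ s, V x x.2 := hcover (subset_closure hy)
  simp only [Set.mem_iUnion] at this
  obtain ⟨x, hxs, hyV⟩ := this
  calc ‖fderiv ℝ u y‖ ≤ C x x.2 := hC x x.2 y ⟨hy, hyV⟩
    _ ≤ |C x x.2| := le_abs_self _
    _ ≤ ∑ x ∈ s, |C x x.2| := Finset.single_le_sum (f := fun (x : closure O) => |C x.1 x.2|) (fun i _ => abs_nonneg _) hxs


lemma integral_fderiv_apply_eq_zero {d : ℕ} (g : EuclideanSpace ℝ (Fin d) → ℝ)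
    (hg : ContDiff ℝ 1 g) (h'g : HasCompactSupport g) (v : EuclideanSpace ℝ (Fin d)) :
    ∫ x, fderiv ℝ g x v = 0 := by
  obtain ⟨D, hD⟩ := hg.lipschitzWith_of_hasCompactSupport h'g one_ne_zero
  have key := LipschitzWith.integral_lineDeriv_mul_eq (μ := volume)
    (LipschitzWith.const (b := (1:ℝ))) hD h'g (-v)
  have h1 : ∀ x : EuclideanSpace ℝ (Fin d), lineDeriv ℝ (fun _ => (1:ℝ)) x (-v) = 0 := by
    intro x
    simp [lineDeriv]
  have h2 : ∀ x : EuclideanSpace ℝ (Fin d), lineDeriv ℝ g x (-(-v)) = fderiv ℝ g x v := by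
    intro x
    rw [neg_neg]
    exact (hg.differentiable one_ne_zero x).lineDeriv_eq_fderiv
  simp only [h1, h2, zero_mul, mul_one, integral_zero] at key
  exact key.symm


lemma abs_le_mul_infDist {E : Type*} [NormedAddCommGroup E] [NormedSpace ℝ E] [ProperSpace E]
    {O : Set E} (hO : IsOpen O) (hne : Oᶜ.Nonempty) (u : E → ℝ)
    (hcont : ContinuousOn u (closure O))
    (hdiff : ∀ x ∈ O, DifferentiableAt ℝ u x) {M : ℝ}
    (hbd : ∀ x ∈ O, ‖fderiv ℝ u x‖ ≤ M)
    (h0 : ∀ x ∈ frontier O, u x = 0) :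
    ∀ x ∈ O, |u x| ≤ M * infDist x Oᶜ := by
  intro x hx
  obtain ⟨z, hzOc, hdz⟩ := (hO.isClosed_compl).exists_infDist_eq_dist hne x
  set D := infDist x Oᶜ with hD
  have hDpos : 0 < D := by
    rw [hD]
    rw [← hO.isClosed_compl.notMem_iff_infDist_pos hne]
    simpa using hx
  have hball : Metric.ball x D ⊆ O := by
    intro y hy
    by_contra hyO
    have : D ≤ dist x y := by
      rw [hD]; exact Metric.infDist_le_dist_of_mem (Set.mem_compl hyO)
    rw [Metric.mem_ball, dist_comm] at hy
    linarith
  set c : ℕ → ℝ := fun n => 1 - 1 / ((n : ℝ) + 1) with hc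
  have hc0 : ∀ n, 0 ≤ c n := by
    intro n
    have h1 : 1 / ((n : ℝ) + 1) ≤ 1 := by
      rw [div_le_one (by positivity)]; linarith [Nat.cast_nonneg (α := ℝ) n]
    simp only [hc]; linarith
  have hc1 : ∀ n, c n < 1 := by
    intro n
    have : 0 < 1 / ((n : ℝ) + 1) := by positivity
    simp only [hc]; linarith
  have hclim : Tendsto c atTop (nhds 1) := by
    have := tendsto_one_div_add_atTop_nhds_zero_nat (𝕜 := ℝ)
    simpa [hc] using tendsto_const_nhds.sub this
  set m : ℕ → E := fun n => x + c n • (z - x) with hm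
  have hmball : ∀ n, m n ∈ Metric.ball x D := by
    intro n
    simp only [hm, Metric.mem_ball, dist_self_add_left, norm_smul, Real.norm_eq_abs,
      abs_of_nonneg (hc0 n)]
    calc c n * ‖z - x‖ ≤ c n * dist x z := by
          rw [dist_comm, dist_eq_norm]
        _ < 1 * dist x z := by
          apply mul_lt_mul_of_pos_right (hc1 n)
          rw [← hdz]; exact hDpos
        _ = D := by rw [one_mul, hdz]
  have hmO : ∀ n, m n ∈ O := fun n => hball (hmball n)
  have hmlim : Tendsto m atTop (nhds z) := by
    have h1 : Tendsto (fun n => c n • (z - x)) atTop (nhds ((1:ℝ) • (z - x))) :=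
      hclim.smul_const _
    have := h1.const_add x
    simpa [hm] using this
  have hzcl : z ∈ closure O := by
    exact mem_closure_of_tendsto hmlim (Filter.Eventually.of_forall fun n => hmO n)
  have hzfr : z ∈ frontier O := by
    rw [hO.frontier_eq]
    exact ⟨hzcl, hzOc⟩
  have huz : u z = 0 := h0 z hzfr
  -- mean value on the ball
  have hmv : ∀ n, ‖u (m n) - u x‖ ≤ M * ‖m n - x‖ := by
    intro n
    apply Convex.norm_image_sub_le_of_norm_fderiv_le
      (fun y hy => hdiff y (hball hy)) (fun y hy => hbd y (hball hy))
      (convex_ball x D) (Metric.mem_ball_self hDpos) (hmball n)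
  -- take limits
  have hlhs : Tendsto (fun n => ‖u (m n) - u x‖) atTop (nhds ‖u z - u x‖) := by
    have hum : Tendsto (fun n => u (m n)) atTop (nhds (u z)) := by
      apply (hcont z hzcl).tendsto.comp
      rw [tendsto_nhdsWithin_iff]
      exact ⟨hmlim, Filter.Eventually.of_forall fun n => subset_closure (hmO n)⟩
    exact (hum.sub tendsto_const_nhds).norm
  have hrhs : Tendsto (fun n => M * ‖m n - x‖) atTop (nhds (M * ‖z - x‖)) := by
    exact ((hmlim.sub tendsto_const_nhds).norm).const_mul M
  have := le_of_tendsto_of_tendsto' hlhs hrhs hmv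
  rw [huz] at this
  simp only [zero_sub, norm_neg, Real.norm_eq_abs] at this
  calc |u x| ≤ M * ‖z - x‖ := this
    _ = M * D := by rw [hdz, dist_comm, dist_eq_norm]


lemma exists_cutoff {d : ℕ} (O : Set (EuclideanSpace ℝ (Fin d))) {ε : ℝ} (hε : 0 < ε) :
    ∃ χ : EuclideanSpace ℝ (Fin d) → ℝ,
      ContDiff ℝ 1 χ ∧
      (∀ x, 0 ≤ χ x) ∧ (∀ x, χ x ≤ 1) ∧
      (∀ x, infDist x Oᶜ ≤ ε → χ x = 0) ∧
      (∀ x, 4 * ε ≤ infDist x Oᶜ → χ x = 1) ∧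
      (∀ x, ‖fderiv ℝ χ x‖ ≤ ε⁻¹) := by
  set ψ : EuclideanSpace ℝ (Fin d) → ℝ :=
    fun y => max 0 (min 1 (ε⁻¹ * infDist y Oᶜ - 2)) with hψdef
  have hψ01 : ∀ y, 0 ≤ ψ y ∧ ψ y ≤ 1 := by
    intro y
    refine ⟨le_max_left _ _, ?_⟩
    simp only [hψdef, max_le_iff]
    exact ⟨zero_le_one, min_le_left _ _⟩
  have hψ0 : ∀ y, infDist y Oᶜ ≤ 2 * ε → ψ y = 0 := by
    intro y hy
    have h1 : ε⁻¹ * infDist y Oᶜ - 2 ≤ 0 := by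
      have : ε⁻¹ * infDist y Oᶜ ≤ ε⁻¹ * (2 * ε) :=
        mul_le_mul_of_nonneg_left hy (by positivity)
      have h2 : ε⁻¹ * (2 * ε) = 2 := by field_simp
      linarith
    have : min 1 (ε⁻¹ * infDist y Oᶜ - 2) ≤ 0 := le_trans (min_le_right _ _) h1
    simp only [hψdef]
    exact max_eq_left this
  have hψ1 : ∀ y, 3 * ε ≤ infDist y Oᶜ → ψ y = 1 := by
    intro y hy
    have h1 : (1:ℝ) ≤ ε⁻¹ * infDist y Oᶜ - 2 := by
      have : ε⁻¹ * (3 * ε) ≤ ε⁻¹ * infDist y Oᶜ :=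
        mul_le_mul_of_nonneg_left hy (by positivity)
      have h2 : ε⁻¹ * (3 * ε) = 3 := by field_simp
      linarith
    simp only [hψdef, min_eq_left h1]
    exact max_eq_right zero_le_one
  have hψlip : ∀ a b : EuclideanSpace ℝ (Fin d), |ψ a - ψ b| ≤ ε⁻¹ * dist a b := by
    intro a b
    have h1 : |ψ a - ψ b| ≤ max |(0:ℝ) - 0| |min 1 (ε⁻¹ * infDist a Oᶜ - 2) -
        min 1 (ε⁻¹ * infDist b Oᶜ - 2)| := abs_max_sub_max_le_max _ _ _ _
    have h2 : |min 1 (ε⁻¹ * infDist a Oᶜ - 2) - min 1 (ε⁻¹ * infDist b Oᶜ - 2)| ≤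
        max |(1:ℝ) - 1| |(ε⁻¹ * infDist a Oᶜ - 2) - (ε⁻¹ * infDist b Oᶜ - 2)| :=
      abs_min_sub_min_le_max _ _ _ _
    have h3 : |(ε⁻¹ * infDist a Oᶜ - 2) - (ε⁻¹ * infDist b Oᶜ - 2)| ≤ ε⁻¹ * dist a b := by
      have h4 : |infDist a Oᶜ - infDist b Oᶜ| ≤ dist a b := by
        rw [abs_sub_le_iff]
        constructor
        · linarith [infDist_le_infDist_add_dist (x := a) (y := b) (s := Oᶜ)]
        · linarith [infDist_le_infDist_add_dist (x := b) (y := a) (s := Oᶜ),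
            dist_comm a b]
      have h5 : (ε⁻¹ * infDist a Oᶜ - 2) - (ε⁻¹ * infDist b Oᶜ - 2) =
          ε⁻¹ * (infDist a Oᶜ - infDist b Oᶜ) := by ring
      rw [h5, abs_mul, abs_of_nonneg (by positivity : (0:ℝ) ≤ ε⁻¹)]
      exact mul_le_mul_of_nonneg_left h4 (by positivity)
    have h5 : (0:ℝ) ≤ ε⁻¹ * dist a b := by positivity
    simp only [sub_self, abs_zero] at h1 h2
    calc |ψ a - ψ b| ≤ _ := h1
      _ ≤ ε⁻¹ * dist a b := by
          rw [max_le_iff]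
          exact ⟨h5, le_trans h2 (by rw [max_le_iff]; exact ⟨h5, h3⟩)⟩
  have hψlipW : LipschitzWith (Real.toNNReal ε⁻¹) ψ := by
    apply LipschitzWith.of_dist_le_mul
    intro a b
    rw [Real.dist_eq, Real.coe_toNNReal _ (by positivity)]
    exact hψlip a b
  have hψcont : Continuous ψ := hψlipW.continuous
  set b : ContDiffBump (0 : EuclideanSpace ℝ (Fin d)) :=
    ⟨ε/2, ε, by positivity, by linarith⟩ with hb
  set χ : EuclideanSpace ℝ (Fin d) → ℝ :=
    fun x => ∫ t, b.normed volume t * ψ (x - t) with hχdef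
  have hint : ∀ x : EuclideanSpace ℝ (Fin d),
      Integrable (fun t => b.normed volume t * ψ (x - t)) volume := by
    intro x
    apply Continuous.integrable_of_hasCompactSupport
    · exact b.continuous_normed.mul (hψcont.comp (continuous_const.sub continuous_id))
    · apply HasCompactSupport.intro (isCompact_closedBall (0 : EuclideanSpace ℝ (Fin d)) ε)
      intro t ht
      have : t ∉ Function.support (b.normed volume) := by
        rw [b.support_normed_eq]
        intro h
        exact ht (Metric.ball_subset_closedBall h)
      rw [Function.notMem_support.1 this, zero_mul]
  have hχsmooth : ContDiff ℝ 1 χ := by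
    have hconv : χ = MeasureTheory.convolution (b.normed volume) ψ
        (ContinuousLinearMap.lsmul ℝ ℝ) volume := by
      funext x
      simp only [hχdef, MeasureTheory.convolution, ContinuousLinearMap.lsmul_apply,
        smul_eq_mul]
    rw [hconv]
    exact HasCompactSupport.contDiff_convolution_left _ b.hasCompactSupport_normed
      (b.contDiff_normed (n := 1)) (hψcont.locallyIntegrable)
  have hχ0 : ∀ x, infDist x Oᶜ ≤ ε → χ x = 0 := by
    intro x hx
    have h0 : ∀ t, b.normed volume t * ψ (x - t) = 0 := by
      intro t
      by_cases ht : b.normed volume t = 0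
      · rw [ht, zero_mul]
      · have htb : t ∈ Metric.ball (0 : EuclideanSpace ℝ (Fin d)) ε := by
          have : t ∈ Function.support (b.normed volume) := ht
          rwa [b.support_normed_eq] at this
        have htn : ‖t‖ < ε := by simpa [Metric.mem_ball, dist_zero_right] using htb
        have hle : infDist (x - t) Oᶜ ≤ 2 * ε := by
          have hd : dist (x - t) x = ‖t‖ := by
            rw [dist_eq_norm]; simp
          calc infDist (x - t) Oᶜ ≤ infDist x Oᶜ + dist (x - t) x :=
              infDist_le_infDist_add_dist
            _ ≤ ε + ‖t‖ := by rw [hd]; linarith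
            _ ≤ 2 * ε := by linarith
        rw [hψ0 _ hle, mul_zero]
    simp only [hχdef, h0, integral_zero]
  have hχ1 : ∀ x, 4 * ε ≤ infDist x Oᶜ → χ x = 1 := by
    intro x hx
    have heq : ∀ t, b.normed volume t * ψ (x - t) = b.normed volume t := by
      intro t
      by_cases ht : b.normed volume t = 0
      · rw [ht, zero_mul]
      · have htb : t ∈ Metric.ball (0 : EuclideanSpace ℝ (Fin d)) ε := by
          have : t ∈ Function.support (b.normed volume) := ht
          rwa [b.support_normed_eq] at this
        have htn : ‖t‖ < ε := by simpa [Metric.mem_ball, dist_zero_right] using htb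
        have h3 : 3 * ε ≤ infDist (x - t) Oᶜ := by
          have h4 : infDist x Oᶜ ≤ infDist (x - t) Oᶜ + dist x (x - t) :=
            infDist_le_infDist_add_dist
          have hd : dist x (x - t) = ‖t‖ := by
            rw [dist_eq_norm]; simp
          rw [hd] at h4
          linarith
        rw [hψ1 _ h3, mul_one]
    simp only [hχdef, heq]
    exact b.integral_normed
  have hχlip : ∀ a c : EuclideanSpace ℝ (Fin d), |χ a - χ c| ≤ ε⁻¹ * dist a c := by
    intro a c
    have hI1 : Integrable (fun t => b.normed volume t * (ψ (a - t) - ψ (c - t))) volume := by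
      have := (hint a).sub (hint c)
      simpa [mul_sub, Pi.sub_def] using this
    have hsub : χ a - χ c = ∫ t, b.normed volume t * (ψ (a - t) - ψ (c - t)) := by
      simp only [hχdef]
      rw [← integral_sub (hint a) (hint c)]
      congr 1
      funext t
      ring
    rw [hsub]
    have habs : |∫ t, b.normed volume t * (ψ (a - t) - ψ (c - t))|
        ≤ ∫ t, |b.normed volume t * (ψ (a - t) - ψ (c - t))| := by
      have h := norm_integral_le_integral_norm (μ := volume)
        (fun t => b.normed volume t * (ψ (a - t) - ψ (c - t)))
      simp only [Real.norm_eq_abs] at h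
      exact h
    apply le_trans habs
    calc ∫ t, |b.normed volume t * (ψ (a - t) - ψ (c - t))|
        ≤ ∫ t, b.normed volume t * (ε⁻¹ * dist a c) := by
          apply integral_mono hI1.abs (b.integrable_normed.mul_const _)
          intro t
          simp only []
          rw [abs_mul, abs_of_nonneg (b.nonneg_normed t)]
          apply mul_le_mul_of_nonneg_left _ (b.nonneg_normed t)
          calc |ψ (a - t) - ψ (c - t)| ≤ ε⁻¹ * dist (a - t) (c - t) := hψlip _ _
            _ = ε⁻¹ * dist a c := by rw [dist_sub_right]
      _ = ε⁻¹ * dist a c := by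
          rw [integral_mul_const, b.integral_normed, one_mul]
  refine ⟨χ, hχsmooth, ?_, ?_, hχ0, hχ1, ?_⟩
  · intro x
    apply integral_nonneg
    intro t
    exact mul_nonneg (b.nonneg_normed t) (hψ01 _).1
  · intro x
    calc χ x ≤ ∫ t, b.normed volume t := by
          apply integral_mono (hint x) b.integrable_normed
          intro t
          exact mul_le_of_le_one_right (b.nonneg_normed t) (hψ01 _).2
      _ = 1 := b.integral_normed
  · intro x
    have hlipW : LipschitzWith (Real.toNNReal ε⁻¹) χ := by
      apply LipschitzWith.of_dist_le_mul
      intro a c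
      rw [Real.dist_eq, Real.coe_toNNReal _ (by positivity)]
      exact hχlip a c
    have := norm_fderiv_le_of_lipschitz ℝ hlipW (x₀ := x)
    rwa [Real.coe_toNNReal _ (by positivity)] at this

lemma div_identity {d : ℕ} {O : Set (EuclideanSpace ℝ (Fin d))} (hO : IsOpen O)
    {u₁ u₂ χ : EuclideanSpace ℝ (Fin d) → ℝ}
    (h₁ : ContDiffOn ℝ 2 u₁ O) (h₂ : ContDiffOn ℝ 2 u₂ O)
    (hχ : ContDiff ℝ 1 χ) {x : EuclideanSpace ℝ (Fin d)} (hx : x ∈ O) :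
    ∑ i : Fin d, fderiv ℝ (O.indicator (fun y => χ y *
        (u₂ y * fderiv ℝ u₁ y (EuclideanSpace.single i (1:ℝ)) -
         u₁ y * fderiv ℝ u₂ y (EuclideanSpace.single i (1:ℝ))))) x
        (EuclideanSpace.single i (1:ℝ))
      = χ x * (u₂ x * lap u₁ x - u₁ x * lap u₂ x)
        + ∑ i : Fin d, fderiv ℝ χ x (EuclideanSpace.single i (1:ℝ)) *
            (u₂ x * fderiv ℝ u₁ x (EuclideanSpace.single i (1:ℝ)) -
             u₁ x * fderiv ℝ u₂ x (EuclideanSpace.single i (1:ℝ))) := by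
  have hOmem : O ∈ nhds x := hO.mem_nhds hx
  have hD1 : ContDiffOn ℝ 1 (fderiv ℝ u₁) O := by
    have := (contDiffOn_succ_iff_fderiv_of_isOpen hO (n := 1)).1 (by norm_num; exact h₁)
    exact this.2.2
  have hD2 : ContDiffOn ℝ 1 (fderiv ℝ u₂) O := by
    have := (contDiffOn_succ_iff_fderiv_of_isOpen hO (n := 1)).1 (by norm_num; exact h₂)
    exact this.2.2
  have hd1 : DifferentiableAt ℝ u₁ x :=
    ((h₁.differentiableOn (by norm_num)).differentiableAt hOmem)
  have hd2 : DifferentiableAt ℝ u₂ x :=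
    ((h₂.differentiableOn (by norm_num)).differentiableAt hOmem)
  have hpd1 : ∀ i : Fin d, DifferentiableAt ℝ
      (fun y => fderiv ℝ u₁ y (EuclideanSpace.single i (1:ℝ))) x := by
    intro i
    have : ContDiffOn ℝ 1 (fun y => fderiv ℝ u₁ y (EuclideanSpace.single i (1:ℝ))) O :=
      hD1.clm_apply contDiffOn_const
    exact (this.differentiableOn (by norm_num)).differentiableAt hOmem
  have hpd2 : ∀ i : Fin d, DifferentiableAt ℝ
      (fun y => fderiv ℝ u₂ y (EuclideanSpace.single i (1:ℝ))) x := by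
    intro i
    have : ContDiffOn ℝ 1 (fun y => fderiv ℝ u₂ y (EuclideanSpace.single i (1:ℝ))) O :=
      hD2.clm_apply contDiffOn_const
    exact (this.differentiableOn (by norm_num)).differentiableAt hOmem
  have hχd : DifferentiableAt ℝ χ x := (hχ.differentiable one_ne_zero).differentiableAt
  have hterm : ∀ i : Fin d,
      fderiv ℝ (O.indicator (fun y => χ y *
        (u₂ y * fderiv ℝ u₁ y (EuclideanSpace.single i (1:ℝ)) -
         u₁ y * fderiv ℝ u₂ y (EuclideanSpace.single i (1:ℝ))))) x
        (EuclideanSpace.single i (1:ℝ))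
      = χ x * (u₂ x * fderiv ℝ (fun y => fderiv ℝ u₁ y (EuclideanSpace.single i (1:ℝ))) x
                  (EuclideanSpace.single i (1:ℝ))
             + fderiv ℝ u₁ x (EuclideanSpace.single i (1:ℝ)) *
                  fderiv ℝ u₂ x (EuclideanSpace.single i (1:ℝ))
             - u₁ x * fderiv ℝ (fun y => fderiv ℝ u₂ y (EuclideanSpace.single i (1:ℝ))) x
                  (EuclideanSpace.single i (1:ℝ))
             - fderiv ℝ u₂ x (EuclideanSpace.single i (1:ℝ)) *
                  fderiv ℝ u₁ x (EuclideanSpace.single i (1:ℝ)))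
        + fderiv ℝ χ x (EuclideanSpace.single i (1:ℝ)) *
            (u₂ x * fderiv ℝ u₁ x (EuclideanSpace.single i (1:ℝ)) -
             u₁ x * fderiv ℝ u₂ x (EuclideanSpace.single i (1:ℝ))) := by
    intro i
    set e := EuclideanSpace.single i (1:ℝ) with he
    set w : EuclideanSpace ℝ (Fin d) → ℝ := fun y =>
      u₂ y * fderiv ℝ u₁ y e - u₁ y * fderiv ℝ u₂ y e with hw
    have hdw : DifferentiableAt ℝ w x := (hd2.mul (hpd1 i)).sub (hd1.mul (hpd2 i))
    have hind : fderiv ℝ (O.indicator (fun y => χ y * w y)) x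
        = fderiv ℝ (fun y => χ y * w y) x := by
      apply Filter.EventuallyEq.fderiv_eq
      filter_upwards [hOmem] with y hy
      exact Set.indicator_of_mem hy _
    rw [hind, fderiv_fun_mul hχd hdw]
    have hfw : fderiv ℝ w x = (u₂ x • fderiv ℝ (fun y => fderiv ℝ u₁ y e) x
          + fderiv ℝ u₁ x e • fderiv ℝ u₂ x)
        - (u₁ x • fderiv ℝ (fun y => fderiv ℝ u₂ y e) x
          + fderiv ℝ u₂ x e • fderiv ℝ u₁ x) := by
      rw [hw]
      rw [fderiv_fun_sub (hd2.fun_mul (hpd1 i)) (hd1.fun_mul (hpd2 i)),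
        fderiv_fun_mul hd2 (hpd1 i), fderiv_fun_mul hd1 (hpd2 i)]
    simp only [ContinuousLinearMap.add_apply, ContinuousLinearMap.smul_apply,
      ContinuousLinearMap.sub_apply, hfw, smul_eq_mul]
    ring
  rw [Finset.sum_congr rfl (fun i _ => hterm i)]
  rw [Finset.sum_add_distrib]
  congr 1
  simp only [lap, Finset.mul_sum, ← Finset.sum_sub_distrib]
  apply Finset.sum_congr rfl
  intro i _
  ring

/-- Let `O ⊆ ℝ^d` be a bounded open set with `C²` boundary, `p ≥ 2` and
`λ > 0`. If `u₁, u₂` are `C²` on `O` and `C¹` on `closure O`, and each satisfies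
`Δu − u^{p−1} + λu = 0` and `u > 0` in `O`, and `u = 0` on `∂O`, then
`∫_O (u₁^{p−1} u₂ − u₂^{p−1} u₁) dx = 0`. -/
theorem cross_integral_identity_of_positive_solutions (d : ℕ)
    (O : Set (EuclideanSpace ℝ (Fin d))) (hO : IsOpen O)
    (hObdd : Bornology.IsBounded O) (hOC2 : IsC2Boundary O)
    (p : ℝ) (hp : 2 ≤ p) (lam : ℝ) (hlam : 0 < lam)
    (u₁ u₂ : EuclideanSpace ℝ (Fin d) → ℝ)
    (h₁C2 : ContDiffOn ℝ 2 u₁ O) (h₁C1 : ContDiffOn ℝ 1 u₁ (closure O))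
    (h₂C2 : ContDiffOn ℝ 2 u₂ O) (h₂C1 : ContDiffOn ℝ 1 u₂ (closure O))
    (h₁eq : ∀ x ∈ O, lap u₁ x - u₁ x ^ (p - 1) + lam * u₁ x = 0)
    (h₂eq : ∀ x ∈ O, lap u₂ x - u₂ x ^ (p - 1) + lam * u₂ x = 0)
    (h₁pos : ∀ x ∈ O, 0 < u₁ x) (h₂pos : ∀ x ∈ O, 0 < u₂ x)
    (h₁bd : ∀ x ∈ frontier O, u₁ x = 0) (h₂bd : ∀ x ∈ frontier O, u₂ x = 0) :
    ∫ x in O, (u₁ x ^ (p - 1) * u₂ x - u₂ x ^ (p - 1) * u₁ x) = 0 := by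
  rcases Nat.eq_zero_or_pos d with hd0 | hdpos
  · -- dimension zero : the equation forces the integrand to vanish
    subst hd0
    have hzero : EqOn (fun x => u₁ x ^ (p - 1) * u₂ x - u₂ x ^ (p - 1) * u₁ x)
        (fun _ => (0:ℝ)) O := by
      intro x hx
      have e₁ := h₁eq x hx
      have e₂ := h₂eq x hx
      have hl1 : lap u₁ x = 0 := by simp [lap]
      have hl2 : lap u₂ x = 0 := by simp [lap]
      rw [hl1] at e₁
      rw [hl2] at e₂
      have hr1 : u₁ x ^ (p - 1) = lam * u₁ x := by linarith
      have hr2 : u₂ x ^ (p - 1) = lam * u₂ x := by linarith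
      simp only [hr1, hr2]
      ring
    rw [setIntegral_congr_fun hO.measurableSet hzero]
    simp
  -- main case `d ≥ 1`
  have hK : IsCompact (closure O) := hObdd.isCompact_closure
  -- the complement is nonempty
  have hOcne : Oᶜ.Nonempty := by
    obtain ⟨r, hr⟩ := hObdd.subset_closedBall 0
    refine ⟨EuclideanSpace.single ⟨0, hdpos⟩ (r + 1), fun hmem => ?_⟩
    have h1 := hr hmem
    rw [Metric.mem_closedBall, dist_zero_right, EuclideanSpace.norm_single,
      Real.norm_eq_abs] at h1
    have : r < |r + 1| := lt_of_lt_of_le (lt_add_one r) (le_abs_self _)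
    linarith
  -- uniform bounds
  obtain ⟨M₁, hM₁0, hM₁⟩ := exists_fderiv_bound hO hK u₁ h₁C1
  obtain ⟨M₂, hM₂0, hM₂⟩ := exists_fderiv_bound hO hK u₂ h₂C1
  obtain ⟨C₁, hC₁⟩ := hK.exists_bound_of_continuousOn h₁C1.continuousOn
  obtain ⟨C₂, hC₂⟩ := hK.exists_bound_of_continuousOn h₂C1.continuousOn
  set M : ℝ := |M₁| + |M₂| + |C₁| + |C₂| + 1 with hMdef
  have hM0 : 0 < M := by positivity
  have hMf1 : ∀ x ∈ O, ‖fderiv ℝ u₁ x‖ ≤ M := by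
    intro x hx
    have := hM₁ x hx
    have := le_abs_self M₁
    have := abs_nonneg M₂
    have := abs_nonneg C₁
    have := abs_nonneg C₂
    rw [hMdef]; linarith
  have hMf2 : ∀ x ∈ O, ‖fderiv ℝ u₂ x‖ ≤ M := by
    intro x hx
    have := hM₂ x hx
    have := le_abs_self M₂
    have := abs_nonneg M₁
    have := abs_nonneg C₁
    have := abs_nonneg C₂
    rw [hMdef]; linarith
  have hMu1 : ∀ x ∈ closure O, |u₁ x| ≤ M := by
    intro x hx
    have h := hC₁ x hx
    rw [Real.norm_eq_abs] at h
    have := le_abs_self C₁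
    have := abs_nonneg M₁
    have := abs_nonneg M₂
    have := abs_nonneg C₂
    rw [hMdef]; linarith
  have hMu2 : ∀ x ∈ closure O, |u₂ x| ≤ M := by
    intro x hx
    have h := hC₂ x hx
    rw [Real.norm_eq_abs] at h
    have := le_abs_self C₂
    have := abs_nonneg M₁
    have := abs_nonneg M₂
    have := abs_nonneg C₁
    rw [hMdef]; linarith
  have hdiff1 : ∀ x ∈ O, DifferentiableAt ℝ u₁ x := fun x hx =>
    (h₁C2.differentiableOn (by norm_num)).differentiableAt (hO.mem_nhds hx)
  have hdiff2 : ∀ x ∈ O, DifferentiableAt ℝ u₂ x := fun x hx =>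
    (h₂C2.differentiableOn (by norm_num)).differentiableAt (hO.mem_nhds hx)
  have hdist1 : ∀ x ∈ O, |u₁ x| ≤ M * infDist x Oᶜ :=
    abs_le_mul_infDist hO hOcne u₁ h₁C1.continuousOn hdiff1 hMf1 h₁bd
  have hdist2 : ∀ x ∈ O, |u₂ x| ≤ M * infDist x Oᶜ :=
    abs_le_mul_infDist hO hOcne u₂ h₂C1.continuousOn hdiff2 hMf2 h₂bd
  -- the integrand
  set g : EuclideanSpace ℝ (Fin d) → ℝ :=
    fun x => u₁ x ^ (p - 1) * u₂ x - u₂ x ^ (p - 1) * u₁ x with hgdef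
  have hp1 : (0:ℝ) ≤ p - 1 := by linarith
  have hgcont : ContinuousOn g O := by
    apply ContinuousOn.sub
    · exact (h₁C2.continuousOn.rpow_const (fun x _ => Or.inr hp1)).mul h₂C2.continuousOn
    · exact (h₂C2.continuousOn.rpow_const (fun x _ => Or.inr hp1)).mul h₁C2.continuousOn
  have hOfin : volume O < ⊤ := hObdd.measure_lt_top
  set Bg : ℝ := 2 * (M + 1) ^ (p - 1) * (M + 1) with hBgdef
  have hgbd : ∀ x ∈ O, |g x| ≤ Bg := by
    intro x hx
    have hcx : x ∈ closure O := subset_closure hx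
    have h1 : |u₁ x ^ (p - 1)| ≤ (M + 1) ^ (p - 1) := by
      rw [abs_of_nonneg (Real.rpow_nonneg (h₁pos x hx).le _)]
      apply Real.rpow_le_rpow (h₁pos x hx).le _ hp1
      have := hMu1 x hcx
      have := le_abs_self (u₁ x)
      linarith
    have h2 : |u₂ x ^ (p - 1)| ≤ (M + 1) ^ (p - 1) := by
      rw [abs_of_nonneg (Real.rpow_nonneg (h₂pos x hx).le _)]
      apply Real.rpow_le_rpow (h₂pos x hx).le _ hp1
      have := hMu2 x hcx
      have := le_abs_self (u₂ x)
      linarith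
    have h3 : |u₁ x| ≤ M + 1 := by have := hMu1 x hcx; linarith
    have h4 : |u₂ x| ≤ M + 1 := by have := hMu2 x hcx; linarith
    have hM1 : (0:ℝ) ≤ M + 1 := by linarith
    calc |g x| ≤ |u₁ x ^ (p - 1) * u₂ x| + |u₂ x ^ (p - 1) * u₁ x| := abs_sub _ _
      _ = |u₁ x ^ (p-1)| * |u₂ x| + |u₂ x ^ (p-1)| * |u₁ x| := by rw [abs_mul, abs_mul]
      _ ≤ (M + 1) ^ (p - 1) * (M + 1) + (M + 1) ^ (p - 1) * (M + 1) := by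
          apply add_le_add
          · exact mul_le_mul h1 h4 (abs_nonneg _) (Real.rpow_nonneg hM1 _)
          · exact mul_le_mul h2 h3 (abs_nonneg _) (Real.rpow_nonneg hM1 _)
      _ = Bg := by rw [hBgdef]; ring
  have hgint : IntegrableOn g O volume := by
    apply Integrable.mono' (g := fun _ => Bg)
    · exact integrableOn_const hOfin.ne
    · exact hgcont.aestronglyMeasurable hO.measurableSet
    · rw [ae_restrict_iff' hO.measurableSet]
      exact Filter.Eventually.of_forall fun x hx => by
        rw [Real.norm_eq_abs]; exact hgbd x hx
  -- derivative fields
  have hD1 : ContDiffOn ℝ 1 (fderiv ℝ u₁) O := by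
    have := (contDiffOn_succ_iff_fderiv_of_isOpen hO (n := 1)).1 (by norm_num; exact h₁C2)
    exact this.2.2
  have hD2 : ContDiffOn ℝ 1 (fderiv ℝ u₂) O := by
    have := (contDiffOn_succ_iff_fderiv_of_isOpen hO (n := 1)).1 (by norm_num; exact h₂C2)
    exact this.2.2
  set e : Fin d → EuclideanSpace ℝ (Fin d) :=
    fun i => EuclideanSpace.single i (1:ℝ) with hedef
  have hnorme : ∀ i, ‖e i‖ = 1 := by
    intro i
    rw [hedef]
    simp [EuclideanSpace.norm_single]
  set w : Fin d → EuclideanSpace ℝ (Fin d) → ℝ := fun i y =>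
    u₂ y * fderiv ℝ u₁ y (e i) - u₁ y * fderiv ℝ u₂ y (e i) with hwdef
  have hwcont : ∀ i, ContinuousOn (w i) O := by
    intro i
    apply ContinuousOn.sub
    · exact h₂C2.continuousOn.mul ((hD1.clm_apply contDiffOn_const).continuousOn)
    · exact h₁C2.continuousOn.mul ((hD2.clm_apply contDiffOn_const).continuousOn)
  have happly1 : ∀ i, ∀ x ∈ O, |fderiv ℝ u₁ x (e i)| ≤ M := by
    intro i x hx
    calc |fderiv ℝ u₁ x (e i)| ≤ ‖fderiv ℝ u₁ x‖ * ‖e i‖ :=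
        (fderiv ℝ u₁ x).le_opNorm (e i)
      _ ≤ M := by rw [hnorme i, mul_one]; exact hMf1 x hx
  have happly2 : ∀ i, ∀ x ∈ O, |fderiv ℝ u₂ x (e i)| ≤ M := by
    intro i x hx
    calc |fderiv ℝ u₂ x (e i)| ≤ ‖fderiv ℝ u₂ x‖ * ‖e i‖ :=
        (fderiv ℝ u₂ x).le_opNorm (e i)
      _ ≤ M := by rw [hnorme i, mul_one]; exact hMf2 x hx
  have hwbd : ∀ i, ∀ x ∈ O, |w i x| ≤ 2 * M * (M * infDist x Oᶜ) := by
    intro i x hx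
    have h1 := hdist1 x hx
    have h2 := hdist2 x hx
    have h3 := happly1 i x hx
    have h4 := happly2 i x hx
    have hinf : 0 ≤ infDist x Oᶜ := infDist_nonneg
    calc |w i x| ≤ |u₂ x * fderiv ℝ u₁ x (e i)| + |u₁ x * fderiv ℝ u₂ x (e i)| :=
        abs_sub _ _
      _ = |u₂ x| * |fderiv ℝ u₁ x (e i)| + |u₁ x| * |fderiv ℝ u₂ x (e i)| := by
          rw [abs_mul, abs_mul]
      _ ≤ (M * infDist x Oᶜ) * M + (M * infDist x Oᶜ) * M := by
          apply add_le_add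
          · exact mul_le_mul h2 h3 (abs_nonneg _) (by positivity)
          · exact mul_le_mul h1 h4 (abs_nonneg _) (by positivity)
      _ = 2 * M * (M * infDist x Oᶜ) := by ring
  -- the cutoffs
  set ε : ℕ → ℝ := fun n => ((n:ℝ) + 1)⁻¹ with hεdef
  have hεpos : ∀ n, 0 < ε n := by
    intro n
    rw [hεdef]
    positivity
  have hεlim : Tendsto ε atTop (nhds 0) := by
    have := tendsto_one_div_add_atTop_nhds_zero_nat (𝕜 := ℝ)
    simpa [hεdef, one_div] using this
  choose χ hχsm hχ0le hχle1 hχz hχone hχfd using fun n : ℕ => exists_cutoff O (hεpos n)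
  set R : ℕ → EuclideanSpace ℝ (Fin d) → ℝ := fun n x =>
    ∑ i : Fin d, fderiv ℝ (χ n) x (e i) * w i x with hRdef
  have hfdzero : ∀ n : ℕ, ∀ x, 4 * ε n < infDist x Oᶜ → fderiv ℝ (χ n) x = 0 := by
    intro n x hx
    have hopen : IsOpen {z : EuclideanSpace ℝ (Fin d) | 4 * ε n < infDist z Oᶜ} :=
      isOpen_lt continuous_const (continuous_infDist_pt _)
    have heq : (χ n) =ᶠ[nhds x] (fun _ => 1) := by
      filter_upwards [hopen.mem_nhds hx] with z hz
      exact hχone n z (le_of_lt hz)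
    rw [heq.fderiv_eq]
    exact fderiv_const_apply 1
  have htermbd : ∀ n : ℕ, ∀ x ∈ O, ∀ i : Fin d,
      |fderiv ℝ (χ n) x (e i) * w i x| ≤ 8 * M * M := by
    intro n x hx i
    by_cases hc : 4 * ε n < infDist x Oᶜ
    · rw [hfdzero n x hc]
      simp only [ContinuousLinearMap.zero_apply, zero_mul, abs_zero]
      positivity
    · push_neg at hc
      have h1 : |fderiv ℝ (χ n) x (e i)| ≤ (ε n)⁻¹ := by
        calc |fderiv ℝ (χ n) x (e i)| ≤ ‖fderiv ℝ (χ n) x‖ * ‖e i‖ :=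
            (fderiv ℝ (χ n) x).le_opNorm (e i)
          _ ≤ (ε n)⁻¹ := by rw [hnorme i, mul_one]; exact hχfd n x
      have h2 : |w i x| ≤ 2 * M * (M * (4 * ε n)) := by
        refine le_trans (hwbd i x hx) ?_
        have : M * infDist x Oᶜ ≤ M * (4 * ε n) :=
          mul_le_mul_of_nonneg_left hc (le_of_lt hM0)
        nlinarith [hM0]
      calc |fderiv ℝ (χ n) x (e i) * w i x| = |fderiv ℝ (χ n) x (e i)| * |w i x| :=
          abs_mul _ _
        _ ≤ (ε n)⁻¹ * (2 * M * (M * (4 * ε n))) := by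
            apply mul_le_mul h1 h2 (abs_nonneg _) (by positivity)
        _ = 8 * M * M * ((ε n)⁻¹ * ε n) := by ring
        _ = 8 * M * M := by
            rw [inv_mul_cancel₀ (ne_of_gt (hεpos n)), mul_one]
  have hRbd : ∀ n : ℕ, ∀ x ∈ O, |R n x| ≤ (d:ℝ) * (8 * M * M) := by
    intro n x hx
    calc |R n x| ≤ ∑ i : Fin d, |fderiv ℝ (χ n) x (e i) * w i x| :=
        Finset.abs_sum_le_sum_abs _ _
      _ ≤ ∑ _i : Fin d, 8 * M * M :=
          Finset.sum_le_sum (fun i _ => htermbd n x hx i)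
      _ = (d:ℝ) * (8 * M * M) := by
          rw [Finset.sum_const, Finset.card_univ, Fintype.card_fin, nsmul_eq_mul]
  have hRcont : ∀ n : ℕ, ContinuousOn (R n) O := by
    intro n
    apply continuousOn_finset_sum
    intro i _
    exact ((((hχsm n).continuous_fderiv one_ne_zero).clm_apply continuous_const).continuousOn).mul
      (hwcont i)
  have hRint : ∀ n : ℕ, IntegrableOn (R n) O volume := by
    intro n
    apply Integrable.mono' (g := fun _ => (d:ℝ) * (8 * M * M))
    · exact integrableOn_const hOfin.ne
    · exact (hRcont n).aestronglyMeasurable hO.measurableSet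
    · rw [ae_restrict_iff' hO.measurableSet]
      exact Filter.Eventually.of_forall fun x hx => by
        rw [Real.norm_eq_abs]; exact hRbd n x hx
  have hχgint : ∀ n : ℕ, IntegrableOn (fun x => χ n x * g x) O volume := by
    intro n
    apply Integrable.mono' (g := fun _ => Bg)
    · exact integrableOn_const hOfin.ne
    · exact ((hχsm n).continuous.continuousOn.mul hgcont).aestronglyMeasurable hO.measurableSet
    · rw [ae_restrict_iff' hO.measurableSet]
      refine Filter.Eventually.of_forall fun x hx => ?_
      rw [Real.norm_eq_abs, abs_mul]
      calc |χ n x| * |g x| ≤ 1 * |g x| := by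
            apply mul_le_mul_of_nonneg_right _ (abs_nonneg _)
            rw [abs_of_nonneg (hχ0le n x)]
            exact hχle1 n x
        _ = |g x| := one_mul _
        _ ≤ Bg := hgbd x hx
  -- the key identity for each n
  have key : ∀ n : ℕ, (∫ x in O, (χ n x * g x + R n x)) = 0 := by
    intro n
    set W : Fin d → EuclideanSpace ℝ (Fin d) → ℝ :=
      fun i => O.indicator (fun y => χ n y * w i y) with hWdef
    have hWcd : ∀ i, ContDiff ℝ 1 (W i) := by
      intro i
      rw [contDiff_iff_contDiffAt]
      intro y
      by_cases hy : y ∈ O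
      · have hwCD : ContDiffOn ℝ 1 (w i) O := by
          apply ContDiffOn.sub
          · exact (h₂C2.of_le (by norm_num)).mul (hD1.clm_apply contDiffOn_const)
          · exact (h₁C2.of_le (by norm_num)).mul (hD2.clm_apply contDiffOn_const)
        have h1 : ContDiffAt ℝ 1 (fun z => χ n z * w i z) y :=
          ((hχsm n).contDiffAt).mul (hwCD.contDiffAt (hO.mem_nhds hy))
        apply h1.congr_of_eventuallyEq
        filter_upwards [hO.mem_nhds hy] with z hz
        exact Set.indicator_of_mem hz _
      · have hy0 : infDist y Oᶜ = 0 := infDist_zero_of_mem hy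
        have hopen : IsOpen {z : EuclideanSpace ℝ (Fin d) | infDist z Oᶜ < ε n} :=
          isOpen_lt (continuous_infDist_pt _) continuous_const
        have hmem : y ∈ {z : EuclideanSpace ℝ (Fin d) | infDist z Oᶜ < ε n} := by
          rw [Set.mem_setOf_eq, hy0]
          exact hεpos n
        apply (contDiffAt_const (c := (0:ℝ))).congr_of_eventuallyEq
        filter_upwards [hopen.mem_nhds hmem] with z hz
        by_cases hzO : z ∈ O
        · simp only [hWdef, Set.indicator_of_mem hzO, hχz n z (le_of_lt hz), zero_mul]
        · simp only [hWdef, Set.indicator_of_notMem hzO]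
    have hWsupp : ∀ i, HasCompactSupport (W i) := by
      intro i
      apply HasCompactSupport.intro hK
      intro x hx
      exact Set.indicator_of_notMem (fun h => hx (subset_closure h)) _
    have hWint : ∀ i, Integrable (fun x => fderiv ℝ (W i) x (e i)) volume := by
      intro i
      apply Continuous.integrable_of_hasCompactSupport
      · exact ((hWcd i).continuous_fderiv one_ne_zero).clm_apply continuous_const
      · exact (hWsupp i).fderiv_apply ℝ (e i)
    have hzero : (∫ x, ∑ i : Fin d, fderiv ℝ (W i) x (e i)) = 0 := by
      rw [integral_finset_sum _ (fun i _ => hWint i)]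
      apply Finset.sum_eq_zero
      intro i _
      exact integral_fderiv_apply_eq_zero (W i) (hWcd i) (hWsupp i) (e i)
    have hpt : ∀ x, (∑ i : Fin d, fderiv ℝ (W i) x (e i)) =
        O.indicator (fun y => χ n y * (u₂ y * lap u₁ y - u₁ y * lap u₂ y) + R n y) x := by
      intro x
      by_cases hx : x ∈ O
      · rw [Set.indicator_of_mem hx]
        exact div_identity hO h₁C2 h₂C2 (hχsm n) hx
      · rw [Set.indicator_of_notMem hx]
        apply Finset.sum_eq_zero
        intro i _
        have hy0 : infDist x Oᶜ = 0 := infDist_zero_of_mem hx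
        have hopen : IsOpen {z : EuclideanSpace ℝ (Fin d) | infDist z Oᶜ < ε n} :=
          isOpen_lt (continuous_infDist_pt _) continuous_const
        have hmem : x ∈ {z : EuclideanSpace ℝ (Fin d) | infDist z Oᶜ < ε n} := by
          rw [Set.mem_setOf_eq, hy0]
          exact hεpos n
        have heq : (W i) =ᶠ[nhds x] (fun _ => (0:ℝ)) := by
          filter_upwards [hopen.mem_nhds hmem] with z hz
          by_cases hzO : z ∈ O
          · simp only [hWdef, Set.indicator_of_mem hzO, hχz n z (le_of_lt hz), zero_mul]
          · simp only [hWdef, Set.indicator_of_notMem hzO]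
        rw [heq.fderiv_eq, fderiv_const_apply]
        rfl
    have hstep : (∫ x in O, (χ n x * (u₂ x * lap u₁ x - u₁ x * lap u₂ x) + R n x)) = 0 := by
      rw [← integral_indicator hO.measurableSet]
      rw [← hzero]
      congr 1
      funext x
      exact (hpt x).symm
    rw [← hstep]
    apply setIntegral_congr_fun hO.measurableSet
    intro x hx
    have e₁ := h₁eq x hx
    have e₂ := h₂eq x hx
    have hl1 : lap u₁ x = u₁ x ^ (p - 1) - lam * u₁ x := by linarith
    have hl2 : lap u₂ x = u₂ x ^ (p - 1) - lam * u₂ x := by linarith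
    simp only [hgdef, hl1, hl2]
    ring
  -- passing to the limit
  have hT1 : Tendsto (fun n => ∫ x in O, χ n x * g x) atTop (nhds (∫ x in O, g x)) := by
    apply tendsto_integral_of_dominated_convergence (fun x => |g x|)
    · intro n
      exact ((hχsm n).continuous.continuousOn.mul hgcont).aestronglyMeasurable hO.measurableSet
    · exact hgint.abs
    · intro n
      rw [ae_restrict_iff' hO.measurableSet]
      refine Filter.Eventually.of_forall fun x hx => ?_
      rw [Real.norm_eq_abs, abs_mul]
      apply mul_le_of_le_one_left (abs_nonneg _)
      rw [abs_of_nonneg (hχ0le n x)]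
      exact hχle1 n x
    · rw [ae_restrict_iff' hO.measurableSet]
      refine Filter.Eventually.of_forall fun x hx => ?_
      have hpos : 0 < infDist x Oᶜ := by
        rw [← hO.isClosed_compl.notMem_iff_infDist_pos hOcne]
        simpa using hx
      have heps : ∀ᶠ n in atTop, 4 * ε n < infDist x Oᶜ := by
        have h4 : Tendsto (fun n => 4 * ε n) atTop (nhds (4 * 0)) :=
          hεlim.const_mul 4
        rw [mul_zero] at h4
        exact h4.eventually_lt_const hpos
      apply Tendsto.congr' _ (tendsto_const_nhds (x := g x))
      filter_upwards [heps] with n hn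
      rw [hχone n x (le_of_lt hn), one_mul]
  have hT2 : Tendsto (fun n => ∫ x in O, R n x) atTop (nhds 0) := by
    have h0 : (0:ℝ) = ∫ x in O, (0:ℝ) := by simp
    rw [h0]
    apply tendsto_integral_of_dominated_convergence (fun _ => (d:ℝ) * (8 * M * M))
    · intro n
      exact (hRcont n).aestronglyMeasurable hO.measurableSet
    · exact integrableOn_const hOfin.ne
    · intro n
      rw [ae_restrict_iff' hO.measurableSet]
      exact Filter.Eventually.of_forall fun x hx => by
        rw [Real.norm_eq_abs]; exact hRbd n x hx
    · rw [ae_restrict_iff' hO.measurableSet]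
      refine Filter.Eventually.of_forall fun x hx => ?_
      have hpos : 0 < infDist x Oᶜ := by
        rw [← hO.isClosed_compl.notMem_iff_infDist_pos hOcne]
        simpa using hx
      have heps : ∀ᶠ n in atTop, 4 * ε n < infDist x Oᶜ := by
        have h4 : Tendsto (fun n => 4 * ε n) atTop (nhds (4 * 0)) :=
          hεlim.const_mul 4
        rw [mul_zero] at h4
        exact h4.eventually_lt_const hpos
      apply Tendsto.congr' _ (tendsto_const_nhds (x := (0:ℝ)))
      filter_upwards [heps] with n hn
      rw [hRdef]
      simp only []
      apply (Finset.sum_eq_zero _).symm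
      intro i _
      rw [hfdzero n x hn]
      simp
  have hsum : ∀ n : ℕ, (∫ x in O, χ n x * g x) = - ∫ x in O, R n x := by
    intro n
    have h1 := key n
    rw [integral_add (hχgint n) (hRint n)] at h1
    linarith
  have hT3 : Tendsto (fun n => ∫ x in O, χ n x * g x) atTop (nhds (-0)) := by
    apply Tendsto.congr _ hT2.neg
    intro n
    exact (hsum n).symm
  have hfinal := tendsto_nhds_unique hT1 hT3
  rw [neg_zero] at hfinal
  exact hfinal
end

section
/- (Parabolic maximum principle for the damped heat inequality) Let O ⊆ ℝ^d be a bounded open set, T > 0, p a real number with p ≥ 2, and β : [0,T] × O → ℝ a function with β(t,x) ≥ 0 everywhere. Let u : ℝ × ℝ^d → ℝ be continuous on [0,T] × closure(O), and suppose that on (0,T] × O the partial derivative ∂u/∂t exists and u(t,·) is twice continuously differentiable in x, with ∂u/∂t(t,x) − Δ_x u(t,x) + β(t,x)|u(t,x)|^{p−2}u(t,x) ≥ 0 for all (t,x) ∈ (0,T] × O. Assume u(0,x) ≥ 0 for all x in the closure of O, and u(t,x) = 0 for all t ∈ [0,T] and x ∈ ∂O. Then u(t,x) ≥ 0 for all (t,x)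 ∈ [0,T] × closure(O). -/
open MeasureTheory

open Filter Topology

/-- Second derivative test (necessary direction), 1-D: at a local minimum of `f` at `0`,
if `f'` is a derivative of `f` near `0` and `f'` has derivative `c` at `0`, then `0 ≤ c`. -/
lemma second_deriv_nonneg_of_isLocalMin {f f' : ℝ → ℝ} {c : ℝ}
    (hf' : ∀ᶠ s in 𝓝 (0 : ℝ), HasDerivAt f (f' s) s)
    (hf'' : HasDerivAt f' c 0) (hmin : IsLocalMin f 0) : 0 ≤ c := by
  by_contra hc
  push_neg at hc
  have hf'0 : f' 0 = 0 := hmin.hasDerivAt_eq_zero hf'.self_of_nhds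
  have hslope : Tendsto (fun s : ℝ => f' s / s) (𝓝[≠] (0 : ℝ)) (𝓝 c) := by
    have := hasDerivAt_iff_tendsto_slope.1 hf''
    have heq : (fun s : ℝ => f' s / s) = slope f' 0 := by
      funext s; rw [slope_def_field]; simp [hf'0]
    rw [heq]; exact this
  have hev : ∀ᶠ s in 𝓝[≠] (0 : ℝ), f' s / s < 0 :=
    hslope.eventually (tendsto_id.eventually_lt_const hc)
  -- extract a radius on which everything holds
  have hmin' : ∀ᶠ s in 𝓝 (0 : ℝ), f 0 ≤ f s := hmin
  have hall : ∀ᶠ s in 𝓝[≠] (0 : ℝ),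
      f' s / s < 0 ∧ HasDerivAt f (f' s) s ∧ f 0 ≤ f s :=
    hev.and (((hf'.and hmin').filter_mono nhdsWithin_le_nhds))
  rw [eventually_nhdsWithin_iff] at hall
  rw [Metric.eventually_nhds_iff] at hall
  obtain ⟨δ, hδ, hball⟩ := hall
  set s₀ : ℝ := -(δ / 2) with hs₀
  have hδ2 : (0:ℝ) < δ / 2 := by positivity
  have hs₀neg : s₀ < 0 := by rw [hs₀]; linarith
  have hsub : ∀ s ∈ Set.Icc s₀ (0 : ℝ), dist s (0 : ℝ) < δ := by
    intro s hs
    rw [Real.dist_eq, sub_zero, abs_lt]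
    constructor
    · have := hs.1; rw [hs₀] at this; linarith
    · linarith [hs.2]
  -- f is strictly monotone on [s₀, 0]
  have hmono : StrictMonoOn f (Set.Icc s₀ (0 : ℝ)) := by
    apply strictMonoOn_of_deriv_pos (convex_Icc _ _)
    · intro s hs
      rcases eq_or_ne s 0 with rfl | hsne
      · exact hf'.self_of_nhds.continuousAt.continuousWithinAt
      · exact ((hball (hsub s hs) hsne).2.1.continuousAt).continuousWithinAt
    · intro s hs
      rw [interior_Icc] at hs
      have hsne : s ≠ 0 := ne_of_lt hs.2
      have h := hball (hsub s ⟨hs.1.le, hs.2.le⟩) hsne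
      rw [h.2.1.deriv]
      have := h.1
      rcases div_neg_iff.1 this with ⟨h1, h2⟩ | ⟨h1, h2⟩
      · exact h1
      · linarith [hs.2]
  have hlt : f s₀ < f 0 := hmono ⟨le_refl _, hs₀neg.le⟩ ⟨hs₀neg.le, le_refl _⟩ hs₀neg
  have hge : f 0 ≤ f s₀ := (hball (hsub s₀ ⟨le_refl _, hs₀neg.le⟩) hs₀neg.ne).2.2
  linarith

/-- At an interior local minimum of a `C²` function, the Laplacian is nonnegative. -/
lemma lap_nonneg_of_isLocalMin (d : ℕ) (O : Set (EuclideanSpace ℝ (Fin d))) (hO : IsOpen O)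
    (f : EuclideanSpace ℝ (Fin d) → ℝ) (x₀ : EuclideanSpace ℝ (Fin d)) (hx₀ : x₀ ∈ O)
    (hC2 : ContDiffOn ℝ 2 f O) (hmin : IsLocalMin f x₀) : 0 ≤ lap f x₀ := by
  have hO𝓝 : O ∈ 𝓝 x₀ := hO.mem_nhds hx₀
  set F := fderiv ℝ f with hF
  have hdF : ContDiffOn ℝ 1 F O := hC2.fderiv_of_isOpen hO (by norm_num)
  have hFd : HasFDerivAt F (fderiv ℝ F x₀) x₀ :=
    ((hdF.differentiableOn (by norm_num)).differentiableAt hO𝓝).hasFDerivAt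
  set D := fderiv ℝ F x₀ with hD
  have key : ∀ i : Fin d, 0 ≤ D (EuclideanSpace.single i (1 : ℝ)) (EuclideanSpace.single i 1) := by
    intro i
    set e := EuclideanSpace.single i (1 : ℝ) with he
    set c : ℝ → EuclideanSpace ℝ (Fin d) := fun s => x₀ + s • e with hc
    have hc0 : c 0 = x₀ := by simp [hc]
    have hccont : Continuous c := by fun_prop
    have hcd : ∀ s : ℝ, HasDerivAt c e s := by
      intro s
      have : HasDerivAt (fun t : ℝ => x₀ + t • e) ((1 : ℝ) • e) s :=
        (((hasDerivAt_id s).smul_const e).const_add x₀)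
      rw [one_smul] at this; exact this
    have hcin : ∀ᶠ s in 𝓝 (0 : ℝ), c s ∈ O := by
      have : Tendsto c (𝓝 0) (𝓝 x₀) := by rw [← hc0]; exact hccont.continuousAt
      exact this.eventually_mem hO𝓝
    have hf'ev : ∀ᶠ s in 𝓝 (0 : ℝ), HasDerivAt (f ∘ c) (F (c s) e) s := by
      filter_upwards [hcin] with s hs
      have hfd : HasFDerivAt f (F (c s)) (c s) :=
        ((hC2.differentiableOn (by norm_num)).differentiableAt (hO.mem_nhds hs)).hasFDerivAt
      exact hfd.comp_hasDerivAt s (hcd s)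
    have hf'' : HasDerivAt (fun s => F (c s) e) (D e e) 0 := by
      have h1 : HasDerivAt (fun s => F (c s)) (D e) 0 := by
        have hFd' : HasFDerivAt F D (c 0) := hc0 ▸ hFd
        exact hFd'.comp_hasDerivAt 0 (hcd 0)
      have := h1.clm_apply (hasDerivAt_const (0:ℝ) e)
      simpa using this
    have hminc : IsLocalMin (f ∘ c) 0 := by
      have hmin' : IsLocalMin f (c 0) := hc0 ▸ hmin
      exact hmin'.comp_continuous hccont.continuousAt
    exact second_deriv_nonneg_of_isLocalMin hf'ev hf'' hminc
  -- now identify lap with ∑ D e e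
  have hlap : lap f x₀ = ∑ i : Fin d, D (EuclideanSpace.single i (1:ℝ)) (EuclideanSpace.single i 1) := by
    apply Finset.sum_congr rfl
    intro i _
    set e := EuclideanSpace.single i (1 : ℝ)
    have : HasFDerivAt (fun y => F y e) ((F x₀).comp (0 : EuclideanSpace ℝ (Fin d) →L[ℝ] EuclideanSpace ℝ (Fin d)) + D.flip e) x₀ := by
      have := hFd.clm_apply (hasFDerivAt_const e x₀)
      simpa using this
    rw [this.fderiv]
    simp
  rw [hlap]
  exact Finset.sum_nonneg fun i _ => key i

/-- Parabolic maximum principle for the damped heat inequality: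
Let `O ⊆ ℝ^d` be bounded open, `T > 0`, `p ≥ 2`, `β ≥ 0`. Let `u` be continuous on
`[0,T] × closure O`, with `∂u/∂t` existing and `u(t,·)` twice continuously
differentiable in `x` on `(0,T] × O`, satisfying
`∂u/∂t − Δ_x u + β |u|^{p−2} u ≥ 0` there. If `u(0,·) ≥ 0` on `closure O` and
`u(t,·) = 0` on `∂O` for all `t ∈ [0,T]`, then `u ≥ 0` on `[0,T] × closure O`. -/
theorem parabolic_maximum_principle (d : ℕ)
    (O : Set (EuclideanSpace ℝ (Fin d))) (hO : IsOpen O) (hObdd : Bornology.IsBounded O)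
    (T : ℝ) (hT : 0 < T) (p : ℝ) (hp : 2 ≤ p)
    (β : ℝ → EuclideanSpace ℝ (Fin d) → ℝ) (hβ : ∀ t x, 0 ≤ β t x)
    (u : ℝ → EuclideanSpace ℝ (Fin d) → ℝ)
    (hcont : ContinuousOn (fun q : ℝ × EuclideanSpace ℝ (Fin d) => u q.1 q.2)
      (Set.Icc 0 T ×ˢ closure O))
    (hC2x : ∀ t ∈ Set.Ioc (0 : ℝ) T, ContDiffOn ℝ 2 (u t) O)
    (hineq : ∀ t ∈ Set.Ioc (0 : ℝ) T, ∀ x ∈ O, ∃ ut : ℝ,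
      HasDerivAt (fun s => u s x) ut t ∧
      0 ≤ ut - lap (u t) x + β t x * (|u t x| ^ (p - 2) * u t x))
    (hinit : ∀ x ∈ closure O, 0 ≤ u 0 x)
    (hbd : ∀ t ∈ Set.Icc (0 : ℝ) T, ∀ x ∈ frontier O, u t x = 0) :
    ∀ t ∈ Set.Icc (0 : ℝ) T, ∀ x ∈ closure O, 0 ≤ u t x := by
  intro t ht x hx
  -- it suffices to prove `0 ≤ u t x + ε * t` for every `ε > 0`
  have key : ∀ ε > (0:ℝ), 0 ≤ u t x + ε * t := by
    intro ε hε
    set K : Set (ℝ × EuclideanSpace ℝ (Fin d)) := Set.Icc 0 T ×ˢ closure O with hK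
    have hKc : IsCompact K := isCompact_Icc.prod hObdd.isCompact_closure
    have hKne : K.Nonempty := ⟨(t, x), Set.mk_mem_prod ht hx⟩
    set v : ℝ × EuclideanSpace ℝ (Fin d) → ℝ := fun q => u q.1 q.2 + ε * q.1 with hv
    have hvcont : ContinuousOn v K :=
      hcont.add ((continuous_const.mul continuous_fst).continuousOn)
    obtain ⟨q₀, hq₀K, hq₀min⟩ := hKc.exists_isMinOn hKne hvcont
    obtain ⟨t₀, x₀⟩ := q₀
    obtain ⟨ht₀, hx₀⟩ := hq₀K
    suffices h0 : 0 ≤ v (t₀, x₀) by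
      have := hq₀min (Set.mk_mem_prod ht hx)
      rw [Set.mem_setOf_eq] at this
      simp only [hv] at this h0 ⊢
      linarith
    by_contra hneg
    push_neg at hneg
    -- t₀ ≠ 0
    have ht₀ne : t₀ ≠ 0 := by
      rintro rfl
      have := hinit x₀ hx₀
      simp only [hv] at hneg
      simp at hneg
      linarith
    have ht₀pos : 0 < t₀ := lt_of_le_of_ne ht₀.1 (Ne.symm ht₀ne)
    -- x₀ ∉ frontier O
    have hx₀O : x₀ ∈ O := by
      by_contra hxF
      have hfr : x₀ ∈ frontier O := by
        rw [hO.frontier_eq]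
        exact ⟨hx₀, hxF⟩
      have := hbd t₀ ht₀ x₀ hfr
      simp only [hv, this] at hneg
      nlinarith [ht₀.1]
    have huneg : u t₀ x₀ < 0 := by
      simp only [hv] at hneg
      nlinarith
    obtain ⟨ut, hut, hge⟩ := hineq t₀ ⟨ht₀pos, ht₀.2⟩ x₀ hx₀O
    -- time direction: ut ≤ -ε
    have htime : ut ≤ -ε := by
      set g : ℝ → ℝ := fun s => u s x₀ + ε * s with hg
      have hgd : HasDerivAt g (ut + ε) t₀ := by
        have : HasDerivAt (fun s : ℝ => ε * s) (ε * 1) t₀ := (hasDerivAt_id t₀).const_mul ε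
        have h := hut.add this; rw [mul_one] at h; exact h
      have hgmin : IsMinOn g (Set.Icc 0 T) t₀ := by
        intro s hs
        have := hq₀min (Set.mk_mem_prod hs hx₀)
        simpa [hv, hg] using this
      have hcone : -t₀ ∈ posTangentConeAt (Set.Icc 0 T) t₀ := by
        apply mem_posTangentConeAt_of_segment_subset
        have h0 : t₀ + -t₀ = (0:ℝ) := by ring
        rw [h0]
        exact (convex_Icc (0:ℝ) T).segment_subset ht₀ ⟨le_refl 0, hT.le⟩
      have hloc : IsLocalMinOn g (Set.Icc 0 T) t₀ := hgmin.localize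
      have := hloc.hasFDerivWithinAt_nonneg
        (hgd.hasDerivWithinAt.hasFDerivWithinAt) hcone
      simp only [ContinuousLinearMap.toSpanSingleton_apply,
        smul_eq_mul] at this
      nlinarith
    -- space direction: 0 ≤ lap (u t₀) x₀
    have hspace : 0 ≤ lap (u t₀) x₀ := by
      apply lap_nonneg_of_isLocalMin d O hO (u t₀) x₀ hx₀O (hC2x t₀ ⟨ht₀pos, ht₀.2⟩)
      have : ∀ᶠ y in 𝓝 x₀, y ∈ O := hO.mem_nhds hx₀O
      filter_upwards [this] with y hy
      have := hq₀min (Set.mk_mem_prod ht₀ (subset_closure hy))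
      simpa [hv] using this
    -- damping term is nonpositive
    have hdamp : β t₀ x₀ * (|u t₀ x₀| ^ (p - 2) * u t₀ x₀) ≤ 0 :=
      mul_nonpos_of_nonneg_of_nonpos (hβ t₀ x₀)
        (mul_nonpos_of_nonneg_of_nonpos (Real.rpow_nonneg (abs_nonneg _) _) huneg.le)
    linarith
  -- conclude
  by_contra hneg
  push_neg at hneg
  rcases eq_or_lt_of_le ht.1 with rfl | htpos
  · have := key 1 one_pos
    simp at this
    linarith
  · have := key (-u t x / (2 * t)) (div_pos (by linarith) (by linarith))
    have h2 : -u t x / (2 * t) * t = -u t x / 2 := by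
      field_simp
    rw [h2] at this
    linarith
end
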